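/- Let m be a positive integer and let x be a real number with 0 < x < 2π. Then ∑_{n=1}^∞ sin(nx)/n^{2m} = ((-1)^m (2π)^{2m-1}/(2m-1)!) · ( ζ'(1-2m, 1 - x/(2π)) − ζ'(1-2m, x/(2π)) ). -/

import Mathlib

open Filter Topology Finset Real

/-- The Hurwitz zeta function `ζ(s, a)` for a real parameter `a > 0`: the meromorphic
continuation in `s` of the series `∑ k : ℕ, (k + a) ^ (-s)` (convergent for `Re s > 1`).
For `0 < a ≤ 1` it is Mathlib's `HurwitzZeta.hurwitzZeta`; for larger `a` it is obtained
through the recurrence `ζ(s, a) = ζ(s, a + 1) + a ^ (-s)`. -/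
noncomputable def hzeta (s : ℂ) (a : ℝ) : ℂ :=
  HurwitzZeta.hurwitzZeta (a : UnitAddCircle) s -
    ∑ j ∈ Finset.range (⌈a⌉₊ - 1), ((a : ℂ) - ((⌈a⌉₊ : ℂ) - 1) + j) ^ (-s)

open HurwitzZeta in
/-- For a positive integer `m` and `0 < x < 2π`,
`∑_{n=1}^∞ sin(nx)/n^(2m) = ((-1)^m (2π)^(2m-1)/(2m-1)!) ·
  (ζ'(1-2m, 1 - x/(2π)) - ζ'(1-2m, x/(2π)))`. -/
theorem sin_series_even_exponent_closed_form (m : ℕ) (hm : 0 < m)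
    (x : ℝ) (hx0 : 0 < x) (hx1 : x < 2 * π) :
    Filter.Tendsto
      (fun N : ℕ => ∑ n ∈ Finset.range N,
        (Real.sin ((n + 1) * x) : ℂ) / ((n : ℂ) + 1) ^ (2 * m))
      Filter.atTop
      (𝓝 ((-1) ^ m * (2 * (π : ℂ)) ^ (2 * m - 1) / (Nat.factorial (2 * m - 1) : ℂ) *
        (deriv (fun s => hzeta s (1 - x / (2 * π))) (1 - 2 * (m : ℂ)) -
          deriv (fun s => hzeta s (x / (2 * π))) (1 - 2 * (m : ℂ))))) := by
  have hπ : (0:ℝ) < π := Real.pi_pos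
  have hπc : (π:ℂ) ≠ 0 := Complex.ofReal_ne_zero.mpr hπ.ne'
  set a : ℝ := x / (2 * π) with ha
  have ha0 : 0 < a := div_pos hx0 (by positivity)
  have ha1 : a < 1 := (div_lt_one (by positivity)).mpr hx1
  have hax : 2 * π * a = x := by rw [ha]; field_simp
  set t0 : ℂ := 2 * (m:ℂ) with ht0
  have ht0' : t0 = ((2*m : ℕ) : ℂ) := by rw [ht0]; push_cast; ring
  have ht0re : (0:ℝ) < t0.re := by
    rw [ht0', Complex.natCast_re]; positivity
  have hne : ∀ s : ℂ, 0 < s.re → ∀ n : ℕ, s ≠ -n := by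
    intro s hs n h
    rw [h] at hs
    simp only [Complex.neg_re, Complex.natCast_re] at hs
    exact absurd hs (not_lt.mpr (neg_nonpos.mpr n.cast_nonneg))
  -- hzeta coincides with hurwitzZeta for parameters in (0,1)
  have hzeq : ∀ b : ℝ, 0 < b → b < 1 →
      (fun s => hzeta s b) = fun s => hurwitzZeta (b : UnitAddCircle) s := by
    intro b hb0 hb1
    have hc : ⌈b⌉₊ = 1 := by
      rw [Nat.ceil_eq_iff one_ne_zero]
      exact ⟨by simpa using hb0, by exact_mod_cast hb1.le⟩
    funext s
    simp [hzeta, hc]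
  set Z : ℂ → ℂ := hurwitzZetaOdd (a : UnitAddCircle) with hZ
  set S : ℂ := sinZeta (a : UnitAddCircle) t0 with hSdef
  set D : ℂ := deriv Z (1 - t0) with hD
  set H : ℂ → ℂ := fun s => 2 * (2*(π:ℂ)) ^ (-s) * Complex.Gamma s *
      sinZeta (a : UnitAddCircle) s with hHdef
  have h2πc : (2*(π:ℂ)) ≠ 0 := by
    simp [hπc]
  have hHdiff : DifferentiableAt ℂ H t0 := by
    apply DifferentiableAt.mul
    · apply DifferentiableAt.mul
      · exact (differentiable_id.neg.differentiableAt.const_cpow (Or.inl h2πc)).const_mul 2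
      · exact Complex.differentiableAt_Gamma t0 (hne t0 ht0re)
    · exact (differentiableAt_sinZeta (a : UnitAddCircle)) t0
  have hsinD : HasDerivAt (fun s : ℂ => Complex.sin ((π:ℂ) * s / 2))
      (Complex.cos ((π:ℂ)*t0/2) * ((π:ℂ)*1/2)) t0 :=
    (Complex.hasDerivAt_sin _).comp t0 (((hasDerivAt_id t0).const_mul (π:ℂ)).div_const 2)
  have hFD : HasDerivAt (fun s => Complex.sin ((π:ℂ)*s/2) * H s)
      (Complex.cos ((π:ℂ)*t0/2) * ((π:ℂ)*1/2) * H t0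
        + Complex.sin ((π:ℂ)*t0/2) * deriv H t0) t0 :=
    hsinD.mul hHdiff.hasDerivAt
  have harg : (π:ℂ) * t0 / 2 = ((m * π : ℝ) : ℂ) := by rw [ht0]; push_cast; ring
  have hsin0 : Complex.sin ((π:ℂ)*t0/2) = 0 := by
    rw [harg, ← Complex.ofReal_sin, Real.sin_nat_mul_pi, Complex.ofReal_zero]
  have hcos : Complex.cos ((π:ℂ)*t0/2) = (-1)^m := by
    rw [harg, ← Complex.ofReal_cos]
    have h := Real.cos_nat_mul_pi_sub 0 m
    simp only [sub_zero, Real.cos_zero, mul_one] at h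
    rw [h]
    push_cast
    ring
  -- eventual equality near t0
  have hEF : (fun s => Z (1 - s)) =ᶠ[𝓝 t0]
      (fun s => Complex.sin ((π:ℂ)*s/2) * H s) := by
    have hev : ∀ᶠ s : ℂ in 𝓝 t0, 0 < s.re :=
      (Complex.continuous_re.tendsto t0).eventually (eventually_gt_nhds ht0re)
    filter_upwards [hev] with s hs
    rw [hZ, hurwitzZetaOdd_one_sub (a : UnitAddCircle) (hne s hs), hHdef]
    ring
  have hE : HasDerivAt (fun s : ℂ => Z (1 - s)) (D * (-1)) t0 := by
    have := ((differentiable_hurwitzZetaOdd (a : UnitAddCircle) (1 - t0)).hasDerivAt).comp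
      t0 ((hasDerivAt_id t0).const_sub 1)
    exact this
  have hkey : D * (-1) = (-1)^m * ((π:ℂ)*1/2) * H t0 := by
    have h1 : deriv (fun s : ℂ => Z (1 - s)) t0 = D * (-1) := hE.deriv
    have h2 := hEF.deriv_eq
    have h3 := hFD.deriv
    rw [h1, h3, hsin0, hcos] at h2
    rw [h2]; ring
  -- Gamma value and power rewrites
  have hGamma : Complex.Gamma t0 = ((2*m-1).factorial : ℂ) := by
    have h : t0 = ((2*m-1 : ℕ) : ℂ) + 1 := by
      rw [ht0']
      have : (2*m : ℕ) = (2*m-1) + 1 := by omega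
      rw [this]; push_cast; ring
    rw [h, Complex.Gamma_nat_eq_factorial]
  have hpow : (2*(π:ℂ))^(-t0) = ((2*(π:ℂ))^(2*m : ℕ))⁻¹ := by
    rw [show -t0 = -((2*m:ℕ):ℂ) by rw [ht0']]
    rw [Complex.cpow_neg, Complex.cpow_natCast]
  have hsplit : (2*(π:ℂ))^(2*m : ℕ) = (2*(π:ℂ))^(2*m-1 : ℕ) * (2*(π:ℂ)) := by
    rw [← pow_succ]
    congr 1
    omega
  have hfact : ((2*m-1).factorial : ℂ) ≠ 0 := Nat.cast_ne_zero.mpr (Nat.factorial_ne_zero _)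
  have hm1 : ((-1:ℂ))^m * ((-1:ℂ))^m = 1 := by
    rw [← pow_add, ← two_mul, pow_mul]; norm_num
  have hPpow : (2*(π:ℂ))^(2*m-1 : ℕ) ≠ 0 := pow_ne_zero _ h2πc
  -- solve for S
  have hPn : ((2*(π:ℂ))^(2*m : ℕ)) ≠ 0 := pow_ne_zero _ h2πc
  have hHval : H t0 = 2 * ((2*(π:ℂ))^(2*m : ℕ))⁻¹ * ((2*m-1).factorial : ℂ) * S := by
    rw [hHdef]
    simp only [hpow, hGamma, hSdef]
  have hkey2 : (D * -1) * ((2*(π:ℂ))^(2*m-1 : ℕ) * (2*(π:ℂ))) =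
      (-1:ℂ)^m * ((π:ℂ)/2) * 2 * ((2*m-1).factorial : ℂ) * S := by
    rw [← hsplit, hkey, hHval]
    field_simp
  have hkey3 : (π:ℂ) * (-(2*(2*(π:ℂ))^(2*m-1 : ℕ)*D)) =
      (π:ℂ) * ((-1:ℂ)^m * ((2*m-1).factorial : ℂ) * S) := by
    linear_combination hkey2
  have h5 := mul_left_cancel₀ hπc hkey3
  have hSval : S = (-1)^m * (2*(π:ℂ))^(2*m-1 : ℕ) / ((2*m-1).factorial : ℂ) * (-2 * D) := by
    rw [div_mul_eq_mul_div, eq_comm, div_eq_iff hfact, eq_comm]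
    linear_combination (-(-1:ℂ)^m) * h5 + (-((2*m-1).factorial : ℂ) * S) * hm1
  -- the series side
  have hre : 1 < t0.re := by
    rw [ht0', Complex.natCast_re]
    exact_mod_cast by omega
  have h1 := hasSum_nat_sinZeta (a : ℝ) hre
  have hsum : HasSum (fun n : ℕ => (Real.sin ((n+1) * x) : ℂ) / ((n:ℂ)+1) ^ (2*m)) S := by
    have h2 : HasSum (fun n : ℕ =>
        (Real.sin (2 * π * a * (n+1)) : ℂ) / ((n+1 : ℕ):ℂ) ^ t0) S := by
      have := (hasSum_nat_add_iff' (f := fun n : ℕ =>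
        (Real.sin (2 * π * a * n) : ℂ) / ((n:ℂ)) ^ t0) 1).mpr h1
      simpa using this
    refine h2.congr_fun fun n => ?_
    have hsin : 2 * π * a * ((n:ℝ)+1) = ((n:ℝ)+1) * x := by rw [← hax]; ring
    rw [show ((n+1 : ℕ):ℂ) = (n:ℂ)+1 by push_cast; ring, ht0', Complex.cpow_natCast]
    push_cast [hsin]
    ring
  -- put everything together
  rw [hzeq (1-a) (by linarith) (by linarith), hzeq a ha0 ha1]
  have hcoe : ((1-a : ℝ) : UnitAddCircle) = -((a : ℝ) : UnitAddCircle) := by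
    rw [show (1-a : ℝ) = 1 + (-a) by ring, AddCircle.coe_add, AddCircle.coe_period, zero_add]
    rfl
  have hs0 : (1 - t0 : ℂ) ≠ 1 := by
    rw [ht0']
    intro h
    have : ((2*m : ℕ) : ℂ) = 0 := by linear_combination -h
    simp at this
    omega
  have hdiff : deriv (fun s => hurwitzZeta ((1-a:ℝ) : UnitAddCircle) s) (1 - t0)
      - deriv (fun s => hurwitzZeta ((a:ℝ) : UnitAddCircle) s) (1 - t0) = -2 * D := by
    rw [← deriv_sub (differentiableAt_hurwitzZeta _ hs0) (differentiableAt_hurwitzZeta _ hs0)]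
    have heq : (fun s => hurwitzZeta ((1-a:ℝ) : UnitAddCircle) s
        - hurwitzZeta ((a:ℝ) : UnitAddCircle) s) = fun s => -2 * Z s := by
      funext s
      rw [hcoe]
      simp only [hurwitzZeta, hurwitzZetaEven_neg, hurwitzZetaOdd_neg, hZ]
      ring
    rw [show hurwitzZeta ((1-a:ℝ) : UnitAddCircle) - hurwitzZeta ((a:ℝ) : UnitAddCircle)
        = fun s => -2 * Z s from heq, deriv_const_mul _ ((differentiable_hurwitzZetaOdd _) (1 - t0)), hD]
  rw [show (1 - 2*(m:ℂ)) = 1 - t0 by rw [ht0], hdiff, ← hSval]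
  exact hsum.tendsto_sum_nat
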